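/- Let f: 𝔻 → ℂ be holomorphic and bounded, and suppose the radial boundary values of f vanish on a subarc of ∂𝔻 of positive length (i.e. lim_{r→1} f(re^{iθ}) = 0 for all θ in a nonempty open interval). Then f ≡ 0 on 𝔻. -/

import Mathlib

open Complex Metric Set Filter MeasureTheory Real Topology

lemma factor_lemma (n : ℕ) (F : ℕ → ℂ → ℂ)
    (hF : ∀ k, DifferentiableOn ℂ (F k) (ball (0:ℂ) 1))
    (h : ∀ z ∈ ball (0:ℂ) 1, ∏ k ∈ Finset.range n, F k z = 0) :
    ∃ k < n, ∀ z ∈ ball (0:ℂ) 1, F k z = 0 := by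
  induction n with
  | zero =>
    exfalso
    have := h 0 (by simp)
    simp at this
  | succ n ih =>
    by_cases hn : ∀ z ∈ ball (0:ℂ) 1, F n z = 0
    · exact ⟨n, Nat.lt_succ_self n, hn⟩
    · push_neg at hn
      obtain ⟨z₀, hz₀, hz₀'⟩ := hn
      have hprod : ∀ z ∈ ball (0:ℂ) 1, (∏ k ∈ Finset.range n, F k z) * F n z = 0 := by
        intro z hz
        have := h z hz
        rwa [Finset.prod_range_succ] at this
      -- near z₀, F n ≠ 0 so product over range n vanishes
      have hcont : ContinuousAt (F n) z₀ :=
        ((hF n).differentiableAt (isOpen_ball.mem_nhds hz₀)).continuousAt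
      have hev : (fun z => ∏ k ∈ Finset.range n, F k z) =ᶠ[nhds z₀] 0 := by
        have h1 : ∀ᶠ z in nhds z₀, F n z ≠ 0 := hcont.eventually_ne hz₀'
        have h2 : ∀ᶠ z in nhds z₀, z ∈ ball (0:ℂ) 1 := isOpen_ball.mem_nhds hz₀
        filter_upwards [h1, h2] with z h1 h2
        have := hprod z h2
        exact (mul_eq_zero.1 this).resolve_right h1
      have hana : AnalyticOnNhd ℂ (fun z => ∏ k ∈ Finset.range n, F k z) (ball (0:ℂ) 1) := by
        apply DifferentiableOn.analyticOnNhd _ isOpen_ball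
        exact DifferentiableOn.fun_finsetProd (fun k _ => hF k)
      have := hana.eqOn_zero_of_preconnected_of_eventuallyEq_zero
        ((convex_ball (0:ℂ) 1).isPreconnected) hz₀ hev
      obtain ⟨k, hk, hk'⟩ := ih (fun z hz => this hz)
      exact ⟨k, hk.trans (Nat.lt_succ_self n), hk'⟩

lemma cauchy_vanish (g : ℂ → ℂ) (hg : DifferentiableOn ℂ g (ball 0 1))
    (M : ℝ) (hM : ∀ z ∈ ball (0:ℂ) 1, ‖g z‖ ≤ M)
    (hlim : ∀ θ : ℝ, Tendsto (fun r : ℝ => g ((r:ℂ) * Complex.exp ((θ:ℂ) * Complex.I)))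
      (nhdsWithin 1 (Set.Iio 1)) (nhds 0)) :
    ∀ w ∈ ball (0:ℂ) 1, g w = 0 := by
  intro w hw
  rw [mem_ball_zero_iff] at hw
  set r₁ : ℝ := (‖w‖ + 1) / 2 with hr₁def
  have hwr₁ : ‖w‖ < r₁ := by rw [hr₁def]; linarith
  have hr₁1 : r₁ < 1 := by rw [hr₁def]; have := norm_nonneg w; linarith
  have hr₁0 : 0 < r₁ := by rw [hr₁def]; have := norm_nonneg w; linarith
  set l : Filter ℝ := nhdsWithin 1 (Set.Iio 1) with hldef
  have hmem : Set.Ioo r₁ 1 ∈ l := Ioo_mem_nhdsLT hr₁1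
  set Φ : ℝ → ℝ → ℂ := fun r θ =>
    deriv (circleMap 0 r) θ • ((circleMap 0 r θ - w)⁻¹ • g (circleMap 0 r θ)) with hΦdef
  -- Cauchy formula on circles of radius r
  have hEq : ∀ r ∈ Set.Ioo r₁ 1, (∫ θ in (0:ℝ)..(2*π), Φ r θ) = (2 * π * Complex.I) • g w := by
    intro r hr
    have hsub : closedBall (0:ℂ) r ⊆ ball (0:ℂ) 1 := by
      intro z hz
      rw [mem_closedBall_zero_iff] at hz
      rw [mem_ball_zero_iff]
      exact lt_of_le_of_lt hz hr.2
    have hdc : DiffContOnCl ℂ g (ball (0:ℂ) r) := by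
      apply DifferentiableOn.diffContOnCl
      rw [closure_ball (0:ℂ) (ne_of_gt (hr₁0.trans hr.1))]
      exact hg.mono hsub
    have hwb : w ∈ ball (0:ℂ) r := by
      rw [mem_ball_zero_iff]; exact hwr₁.trans hr.1
    exact hdc.circleIntegral_sub_inv_smul hwb
  -- M is nonneg
  have hM0 : 0 ≤ M := le_trans (norm_nonneg _) (hM 0 (by simp))
  -- dominated convergence
  set B : ℝ := (r₁ - ‖w‖)⁻¹ * M with hBdef
  have hT : Tendsto (fun r => ∫ θ in (0:ℝ)..(2*π), Φ r θ) l (𝓝 (∫ θ in (0:ℝ)..(2*π), (0:ℂ))) := by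
    apply intervalIntegral.tendsto_integral_filter_of_dominated_convergence (fun _ => B)
    · -- measurability
      filter_upwards [hmem] with r hr
      apply Continuous.aestronglyMeasurable
      have hc1 : Continuous fun θ => circleMap 0 r θ := continuous_circleMap 0 r
      have hball : ∀ θ : ℝ, circleMap 0 r θ ∈ ball (0:ℂ) 1 := by
        intro θ
        rw [mem_ball_zero_iff]
        have : ‖circleMap 0 r θ‖ = |r| := norm_circleMap_zero r θ
        rw [this,
          abs_of_pos (hr₁0.trans hr.1)]
        exact hr.2
      have hgc : Continuous fun θ => g (circleMap 0 r θ) :=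
        (hg.continuousOn.comp_continuous hc1 hball)
      have hne : ∀ θ : ℝ, circleMap 0 r θ - w ≠ 0 := by
        intro θ
        intro hzero
        have h1 : ‖circleMap 0 r θ‖ = |r| := norm_circleMap_zero r θ
        rw [sub_eq_zero] at hzero
        rw [hzero] at h1
        rw [abs_of_pos (hr₁0.trans hr.1)] at h1
        have : ‖w‖ = r := h1
        linarith [hwr₁, hr.1, this.symm.le]
      have : Continuous fun θ => (circleMap 0 r θ - w)⁻¹ :=
        ((hc1.sub continuous_const).inv₀ hne)
      simp only [hΦdef, deriv_circleMap, smul_eq_mul]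
      exact ((hc1.mul continuous_const).mul (this.mul hgc))
    · -- bound
      filter_upwards [hmem] with r hr
      filter_upwards with θ _
      have hrpos : 0 < r := hr₁0.trans hr.1
      have habs : ‖circleMap 0 r θ‖ = r := by
        rw [norm_circleMap_zero, abs_of_pos hrpos]
      have hlow : r₁ - ‖w‖ ≤ ‖circleMap 0 r θ - w‖ := by
        calc r₁ - ‖w‖ ≤ r - ‖w‖ := by linarith [hr.1]
        _ ≤ ‖circleMap 0 r θ‖ - ‖w‖ := by rw [habs]
        _ ≤ ‖circleMap 0 r θ - w‖ := norm_sub_norm_le _ _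
      have hpos : (0:ℝ) < r₁ - ‖w‖ := by linarith
      have hginball : circleMap 0 r θ ∈ ball (0:ℂ) 1 := by
        rw [mem_ball_zero_iff, habs]; exact hr.2
      simp only [hΦdef, deriv_circleMap, smul_eq_mul, norm_mul]
      have h1 : ‖circleMap 0 r θ * Complex.I‖ = r := by
        rw [norm_mul, Complex.norm_I, mul_one, habs]
      have h2 : ‖(circleMap 0 r θ - w)⁻¹‖ ≤ (r₁ - ‖w‖)⁻¹ := by
        rw [norm_inv]
        exact inv_anti₀ hpos hlow
      calc ‖circleMap 0 r θ‖ * ‖Complex.I‖ * (‖(circleMap 0 r θ - w)⁻¹‖ * ‖g (circleMap 0 r θ)‖)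
          ≤ 1 * 1 * ((r₁ - ‖w‖)⁻¹ * M) := by
            apply mul_le_mul
            · rw [Complex.norm_I, mul_one, habs]; linarith [hr.2]
            · exact mul_le_mul h2 (hM _ hginball) (norm_nonneg _) (by positivity)
            · positivity
            · norm_num
        _ = B := by rw [hBdef]; ring
    · -- integrable bound
      exact intervalIntegrable_const
    · -- pointwise limit
      filter_upwards with θ _
      have hkernel : Tendsto (fun r : ℝ => (circleMap 0 r θ * Complex.I) * (circleMap 0 r θ - w)⁻¹)
          l (𝓝 ((circleMap 0 1 θ * Complex.I) * (circleMap 0 1 θ - w)⁻¹)) := by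
        have hcm : Tendsto (fun r : ℝ => circleMap 0 r θ) l (𝓝 (circleMap 0 1 θ)) := by
          have : Continuous fun r : ℝ => circleMap 0 r θ := by
            have hc : Continuous fun r : ℝ => (r:ℂ) * Complex.exp ((θ:ℂ) * Complex.I) :=
              Complex.continuous_ofReal.mul continuous_const
            exact hc.congr fun r => by simp [circleMap]
          exact (this.tendsto 1).mono_left nhdsWithin_le_nhds
        have hne : circleMap 0 1 θ - w ≠ 0 := by
          intro hzero
          rw [sub_eq_zero] at hzero
          have h1 : ‖circleMap 0 1 θ‖ = |(1:ℝ)| := norm_circleMap_zero 1 θ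
          rw [hzero] at h1
          simp at h1
          rw [h1] at hw
          linarith
        exact (hcm.mul tendsto_const_nhds).mul ((hcm.sub tendsto_const_nhds).inv₀ hne)
      have hglim : Tendsto (fun r : ℝ => g (circleMap 0 r θ)) l (𝓝 0) := by
        have := hlim θ
        apply this.congr
        intro r
        simp [circleMap]
      have := hkernel.mul hglim
      rw [mul_zero] at this
      apply this.congr
      intro r
      simp only [hΦdef, deriv_circleMap, smul_eq_mul]
      ring
  rw [intervalIntegral.integral_zero] at hT
  have hconst : (fun r => ∫ θ in (0:ℝ)..(2*π), Φ r θ) =ᶠ[l] fun _ => (2 * π * Complex.I) • g w := by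
    filter_upwards [hmem] with r hr
    exact hEq r hr
  have hne : l.NeBot := by rw [hldef]; infer_instance
  have : (2 * π * Complex.I : ℂ) • g w = (0:ℂ) :=
    tendsto_nhds_unique tendsto_const_nhds (hT.congr' hconst)
  have h2pi : (2 * π * Complex.I : ℂ) ≠ 0 := by
    simp [Real.pi_ne_zero, Complex.I_ne_zero]
  rw [smul_eq_mul] at this
  exact (mul_eq_zero.1 this).resolve_left h2pi

lemma covering (a b : ℝ) (hab : a < b) :
    ∃ n : ℕ, ∀ θ : ℝ, ∃ k < n, ∃ m : ℤ,
      θ + k * ((b - a) / 2) - 2 * π * m ∈ Set.Ioo a b := by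
  set δ : ℝ := (b - a) / 2 with hδ
  have hδ0 : 0 < δ := by rw [hδ]; linarith
  refine ⟨(⌈2 * π / δ⌉).toNat + 2, fun θ => ?_⟩
  set m : ℤ := ⌈(θ - a) / (2 * π)⌉ with hm
  have h2π : (0:ℝ) < 2 * π := by positivity
  have hm1 : θ - a ≤ m * (2 * π) := (div_le_iff₀ h2π).1 (Int.le_ceil _)
  have hm2 : (m : ℝ) * (2 * π) < θ - a + 2 * π := by
    have h1 := Int.ceil_lt_add_one ((θ - a) / (2 * π))
    have hx : (θ - a) / (2 * π) * (2 * π) = θ - a := div_mul_cancel₀ _ h2π.ne'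
    nlinarith [h1, hx, h2π]
  set t : ℝ := (a - θ + 2 * π * m) / δ with ht
  have ht0 : 0 ≤ t := by
    apply div_nonneg _ hδ0.le
    linarith
  have htP : t < 2 * π / δ := by
    rw [ht]
    exact (div_lt_div_iff_of_pos_right hδ0).2 (by linarith)
  set k : ℕ := (⌊t⌋).toNat + 1 with hk
  have hfl : ((⌊t⌋.toNat : ℕ) : ℝ) = (⌊t⌋ : ℝ) := by
    exact_mod_cast Int.toNat_of_nonneg (Int.floor_nonneg.2 ht0)
  have hkt : t < (k : ℝ) := by
    rw [hk]; push_cast; rw [hfl]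
    linarith [Int.lt_floor_add_one t]
  have hkt2 : (k : ℝ) < t + 2 := by
    rw [hk]; push_cast; rw [hfl]
    linarith [Int.floor_le t]
  refine ⟨k, ?_, m, ?_, ?_⟩
  · rw [hk]
    have h1 : ⌊t⌋ ≤ ⌈2 * π / δ⌉ := by
      have : ((⌊t⌋:ℤ):ℝ) < ((⌈2 * π / δ⌉:ℤ):ℝ) :=
        lt_of_le_of_lt (Int.floor_le t) (htP.trans_le (Int.le_ceil _))
      exact_mod_cast this.le
    have := Int.toNat_le_toNat h1
    omega
  · have : t * δ < k * δ := mul_lt_mul_of_pos_right hkt hδ0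
    rw [ht, div_mul_cancel₀ _ (ne_of_gt hδ0)] at this
    linarith
  · have : (k:ℝ) * δ < (t + 2) * δ := mul_lt_mul_of_pos_right hkt2 hδ0
    rw [ht, add_mul, div_mul_cancel₀ _ (ne_of_gt hδ0)] at this
    have hb : b = a + 2 * δ := by rw [hδ]; ring
    linarith

/-- A bounded holomorphic function on the unit disc whose radial boundary
values vanish on an arc of positive length vanishes identically. -/
theorem stmt_4 (f : ℂ → ℂ) (hf : DifferentiableOn ℂ f (Metric.ball 0 1))
    (hb : ∃ M : ℝ, ∀ z ∈ Metric.ball (0 : ℂ) 1, ‖f z‖ ≤ M)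
    (a b : ℝ) (hab : a < b)
    (hlim : ∀ θ ∈ Set.Ioo a b,
      Filter.Tendsto (fun r : ℝ => f ((r : ℂ) * Complex.exp ((θ : ℂ) * Complex.I)))
        (nhdsWithin 1 (Set.Iio 1)) (nhds 0)) :
    Set.EqOn f 0 (Metric.ball 0 1) := by
  obtain ⟨M₀, hM₀⟩ := hb
  set M : ℝ := max M₀ 0 with hMdef
  have hM : ∀ z ∈ ball (0:ℂ) 1, ‖f z‖ ≤ M := fun z hz => (hM₀ z hz).trans (le_max_left _ _)
  have hM0 : 0 ≤ M := le_max_right _ _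
  set δ : ℝ := (b - a) / 2 with hδ
  obtain ⟨n, hn⟩ := covering a b hab
  set c : ℕ → ℂ := fun k => Complex.exp (((k * δ : ℝ) : ℂ) * Complex.I) with hc
  have hcnorm : ∀ k, ‖c k‖ = 1 := fun k => Complex.norm_exp_ofReal_mul_I _
  have hcne : ∀ k, c k ≠ 0 := fun k => Complex.exp_ne_zero _
  have hmaps : ∀ k, Set.MapsTo (fun z => c k * z) (ball (0:ℂ) 1) (ball (0:ℂ) 1) := by
    intro k z hz
    rw [mem_ball_zero_iff] at hz ⊢
    rw [norm_mul, hcnorm, one_mul]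
    exact hz
  set F : ℕ → ℂ → ℂ := fun k z => f (c k * z) with hF
  have hFdiff : ∀ k, DifferentiableOn ℂ (F k) (ball (0:ℂ) 1) := by
    intro k
    exact hf.comp ((differentiable_const (c k)).mul differentiable_id).differentiableOn (hmaps k)
  set g : ℂ → ℂ := fun z => ∏ k ∈ Finset.range n, F k z with hg
  have hgdiff : DifferentiableOn ℂ g (ball (0:ℂ) 1) :=
    DifferentiableOn.fun_finsetProd (fun k _ => hFdiff k)
  have hgbound : ∀ z ∈ ball (0:ℂ) 1, ‖g z‖ ≤ M ^ n := by
    intro z hz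
    rw [hg]
    simp only
    rw [norm_prod]
    calc ∏ k ∈ Finset.range n, ‖F k z‖ ≤ ∏ _k ∈ Finset.range n, M := by
          apply Finset.prod_le_prod
          · intro i _; exact norm_nonneg _
          · intro i _; exact hM _ (hmaps i hz)
      _ = M ^ n := by rw [Finset.prod_const, Finset.card_range]
  -- radial limits of g vanish everywhere
  have hglim : ∀ θ : ℝ, Tendsto (fun r : ℝ => g ((r:ℂ) * Complex.exp ((θ:ℂ) * Complex.I)))
      (nhdsWithin 1 (Set.Iio 1)) (nhds 0) := by
    intro θ
    obtain ⟨k₀, hk₀n, m, hφ⟩ := hn θ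
    set φ : ℝ := θ + k₀ * δ - 2 * π * m with hφdef
    have h0 := hlim φ hφ
    have key : ∀ r : ℝ, c k₀ * ((r:ℂ) * Complex.exp ((θ:ℂ) * Complex.I))
        = (r:ℂ) * Complex.exp ((φ:ℂ) * Complex.I) := by
      intro r
      have h1 : ((φ:ℂ)) * Complex.I
          = (((θ:ℂ) * Complex.I) + ((k₀ * δ : ℝ):ℂ) * Complex.I) - (m:ℂ) * (2 * (π:ℂ) * Complex.I) := by
        rw [hφdef]; push_cast; ring
      rw [h1, Complex.exp_sub, Complex.exp_int_mul_two_pi_mul_I, div_one, Complex.exp_add]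
      rw [hc]
      ring
    have hkey : Tendsto (fun r : ℝ => f (c k₀ * ((r:ℂ) * Complex.exp ((θ:ℂ) * Complex.I))))
        (nhdsWithin 1 (Set.Iio 1)) (nhds 0) := by
      apply h0.congr
      intro r
      rw [key r]
    have hIoo : Set.Ioo (0:ℝ) 1 ∈ nhdsWithin (1:ℝ) (Set.Iio 1) :=
      Ioo_mem_nhdsLT zero_lt_one
    apply squeeze_zero_norm'
      (a := fun r : ℝ => ‖f (c k₀ * ((r:ℂ) * Complex.exp ((θ:ℂ) * Complex.I)))‖ * M ^ (n - 1))
    · filter_upwards [hIoo] with r hr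
      set z : ℂ := (r:ℂ) * Complex.exp ((θ:ℂ) * Complex.I) with hz
      have hzball : z ∈ ball (0:ℂ) 1 := by
        rw [mem_ball_zero_iff, hz, norm_mul]
        rw [show ‖Complex.exp ((θ:ℂ) * Complex.I)‖ = 1 from Complex.norm_exp_ofReal_mul_I θ]
        rw [mul_one, Complex.norm_real, Real.norm_eq_abs, abs_of_pos hr.1]
        exact hr.2
      rw [hg]
      simp only
      rw [norm_prod, ← Finset.mul_prod_erase _ _ (Finset.mem_range.2 hk₀n)]
      apply mul_le_mul_of_nonneg_left _ (norm_nonneg _)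
      calc ∏ k ∈ (Finset.range n).erase k₀, ‖F k z‖
          ≤ ∏ _k ∈ (Finset.range n).erase k₀, M := by
            apply Finset.prod_le_prod
            · intro i _; exact norm_nonneg _
            · intro i _; exact hM _ (hmaps i hzball)
        _ = M ^ (n - 1) := by
            rw [Finset.prod_const, Finset.card_erase_of_mem (Finset.mem_range.2 hk₀n),
              Finset.card_range]
    · have := hkey.norm.mul_const (M ^ (n - 1))
      simpa using this
  have hgzero : ∀ w ∈ ball (0:ℂ) 1, g w = 0 :=
    cauchy_vanish g hgdiff (M ^ n) hgbound hglim
  obtain ⟨k, hk, hkzero⟩ := factor_lemma n F hFdiff hgzero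
  intro w hw
  have hwball : (c k)⁻¹ * w ∈ ball (0:ℂ) 1 := by
    rw [mem_ball_zero_iff] at hw ⊢
    rw [norm_mul, norm_inv, hcnorm, inv_one, one_mul]
    exact hw
  have := hkzero ((c k)⁻¹ * w) hwball
  rw [hF] at this
  simp only at this
  rw [← mul_assoc, mul_inv_cancel₀ (hcne k), one_mul] at this
  simpa using this
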